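/- For every n ≥ 0, the number of Dyck paths of semilength n that have no peak at any height in {2r+3 : r ≥ 0} (i.e., no peak at an odd height ≥ 3) and have no up-run of length greater than 3 equals G_{n+1}, the (n+1)-th generalized Catalan number. -/

import Mathlib

/-- The height of a path (list of up/down steps, `true` = up = +1, `false` = down = −1)
after its first `k` steps. -/
def heightAt (p : List Bool) (k : ℕ) : ℤ :=
  ((p.take k).count true : ℤ) - ((p.take k).count false : ℤ)

/-- A Dyck path: all partial sums nonnegative and total sum zero. -/
def IsDyck (p : List Bool) : Prop :=
  (∀ k, 0 ≤ heightAt p k) ∧ heightAt p p.length = 0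

/-- A peak at height `h`: an up-step immediately followed by a down-step,
the height after the up-step being `h`. -/
def HasPeakAt (p : List Bool) (h : ℤ) : Prop :=
  ∃ i, p[i]? = some true ∧ p[i+1]? = some false ∧ heightAt p (i+1) = h

/-- A valley at height `h`: a down-step immediately followed by an up-step,
the height after the down-step being `h`. -/
def HasValleyAt (p : List Bool) (h : ℤ) : Prop :=
  ∃ i, p[i]? = some false ∧ p[i+1]? = some true ∧ heightAt p (i+1) = h

/-- `p` has an up-run of length `m`: a maximal block of exactly `m` consecutive up-steps. -/
def HasUpRun (p : List Bool) (m : ℕ) : Prop :=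
  ∃ i, (∀ j, j < m → p[i+j]? = some true) ∧
    (i = 0 ∨ p[i-1]? = some false) ∧
    (p[i+m]? = some false ∨ i + m = p.length)

/-- `p` has a down-run of length `m`: a maximal block of exactly `m` consecutive down-steps. -/
def HasDownRun (p : List Bool) (m : ℕ) : Prop :=
  ∃ i, (∀ j, j < m → p[i+j]? = some false) ∧
    (i = 0 ∨ p[i-1]? = some true) ∧
    (p[i+m]? = some true ∨ i + m = p.length)

/-- Generating function of the set of Dyck paths satisfying `Q`:
the coefficient of `z^n` is the number of such paths of semilength `n`. -/
noncomputable def genFun (Q : List Bool → Prop) : PowerSeries ℕ :=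
  PowerSeries.mk fun n => Set.ncard {p : List Bool | p.length = 2 * n ∧ IsDyck p ∧ Q p}

/-- The generalized Catalan numbers: `G 0 = 1`, `G 1 = 1`,
`G (n+2) = G (n+1) + ∑_{k=1}^{n} G k * G (n-k)`. -/
def genCatalan : ℕ → ℕ
  | 0 => 1
  | 1 => 1
  | n + 2 => genCatalan (n + 1) +
      ∑ k ∈ (Finset.Icc 1 n).attach, genCatalan k * genCatalan (n - k.1)
  decreasing_by
  · omega
  · have := Finset.mem_Icc.mp k.2; omega
  · have := Finset.mem_Icc.mp k.2; omega

open List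
def hgt (l : List Bool) : ℤ := (l.count true : ℤ) - (l.count false : ℤ)

lemma heightAt_eq (p : List Bool) (k : ℕ) : heightAt p k = hgt (p.take k) := rfl

@[simp] lemma hgt_nil : hgt [] = 0 := rfl

lemma hgt_append (a b : List Bool) : hgt (a ++ b) = hgt a + hgt b := by
  simp [hgt, List.count_append]; ring

@[simp] lemma hgt_cons (x : Bool) (l : List Bool) :
    hgt (x :: l) = (if x then 1 else -1) + hgt l := by
  cases x <;> simp [hgt, List.count_cons] <;> push_cast <;> ring

lemma heightAt_length (p : List Bool) {k : ℕ} (h : p.length ≤ k) :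
    heightAt p k = hgt p := by rw [heightAt_eq, List.take_of_length_le h]

lemma heightAt_zero (p : List Bool) : heightAt p 0 = 0 := rfl

lemma heightAt_cons (x : Bool) (p : List Bool) (k : ℕ) :
    heightAt (x :: p) (k+1) = (if x then 1 else -1) + heightAt p k := by
  rw [heightAt_eq, List.take_succ_cons, hgt_cons, heightAt_eq]

lemma heightAt_append_left (a b : List Bool) {k : ℕ} (h : k ≤ a.length) :
    heightAt (a ++ b) k = heightAt a k := by
  rw [heightAt_eq, List.take_append_of_le_length h, heightAt_eq]

lemma heightAt_append_right (a b : List Bool) (k : ℕ) :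
    heightAt (a ++ b) (a.length + k) = hgt a + heightAt b k := by
  rw [heightAt_eq, List.take_length_add_append, hgt_append, heightAt_eq]

lemma heightAt_succ (p : List Bool) {k : ℕ} {x : Bool} (h : p[k]? = some x) :
    heightAt p (k+1) = heightAt p k + (if x then 1 else -1) := by
  rw [heightAt_eq, heightAt_eq, List.take_succ, h, hgt_append]
  simp

lemma count_tf (l : List Bool) : l.count true + l.count false = l.length := by
  induction l with
  | nil => simp
  | cons x t ih => cases x <;> simp [List.count_cons] <;> omega

lemma IsDyck.nil : IsDyck [] := ⟨fun k => by simp [heightAt_eq], rfl⟩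

lemma IsDyck.hgt_eq {p : List Bool} (hp : IsDyck p) : hgt p = 0 := by
  have := hp.2; rwa [heightAt_length p (le_refl _)] at this

lemma IsDyck.length_even {p : List Bool} (hp : IsDyck p) : ∃ n, p.length = 2 * n := by
  have h1 := hp.hgt_eq
  have h2 := count_tf p
  unfold hgt at h1
  refine ⟨p.count true, by omega⟩

lemma IsDyck.head_true {p : List Bool} (hp : IsDyck p) (hne : p ≠ []) :
    p[0]? = some true := by
  obtain ⟨x, t, rfl⟩ := List.exists_cons_of_ne_nil hne
  have := hp.1 1
  rw [heightAt_cons, heightAt_zero] at this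
  cases x
  · simp at this
  · simp

lemma IsDyck.last_false {p : List Bool} (hp : IsDyck p) (hne : p ≠ []) :
    p[p.length - 1]? = some false := by
  have hl : 0 < p.length := List.length_pos_iff.mpr hne
  obtain ⟨x, hx⟩ : ∃ x, p[p.length - 1]? = some x := by
    have : p.length - 1 < p.length := by omega
    exact ⟨p[p.length - 1], by simp [List.getElem?_eq_some_iff, this]⟩
  have hs := heightAt_succ p hx
  have : p.length - 1 + 1 = p.length := by omega
  rw [this, hp.2] at hs
  have h1 := hp.1 (p.length - 1)
  cases x
  · exact hx
  · simp at hs; omega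

lemma arch_length (q r : List Bool) :
    (true :: q ++ false :: r).length = q.length + r.length + 2 := by
  simp; omega

lemma hgt_arch (q r : List Bool) : hgt (true :: q ++ false :: r) = hgt q + hgt r := by
  rw [hgt_append, hgt_cons, hgt_cons]; simp; ring

lemma heightAt_arch_low (q r : List Bool) {k : ℕ} (hk : k ≤ q.length) :
    heightAt (true :: q ++ false :: r) (1+k) = 1 + heightAt q k := by
  rw [heightAt_append_left _ _ (by simp; omega)]
  have : (1:ℕ) + k = k + 1 := by omega
  rw [this, heightAt_cons]
  simp

lemma heightAt_arch_high (q r : List Bool) (k : ℕ) :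
    heightAt (true :: q ++ false :: r) (q.length + 2 + k) = hgt q + heightAt r k := by
  have h1 : q.length + 2 + k = (true :: q).length + (1 + k) := by simp; omega
  rw [h1, heightAt_append_right]
  have h2 : (1:ℕ) + k = k + 1 := by omega
  rw [h2, heightAt_cons, hgt_cons]
  simp; ring

lemma getElem?_arch_zero (q r : List Bool) : (true :: q ++ false :: r)[0]? = some true := by
  rw [List.getElem?_append_left (by simp)]; simp

lemma getElem?_arch_q (q r : List Bool) {i : ℕ} (hi : i < q.length) :
    (true :: q ++ false :: r)[i+1]? = q[i]? := by
  rw [List.getElem?_append_left (by simp; omega)]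
  simp

lemma getElem?_arch_mid (q r : List Bool) :
    (true :: q ++ false :: r)[q.length+1]? = some false := by
  rw [List.getElem?_append_right (by simp)]
  simp

lemma getElem?_arch_r (q r : List Bool) (j : ℕ) :
    (true :: q ++ false :: r)[q.length+2+j]? = r[j]? := by
  rw [List.getElem?_append_right (by simp; omega)]
  have : q.length + 2 + j - (true :: q).length = j + 1 := by simp; omega
  rw [this]
  simp

lemma IsDyck.arch {q r : List Bool} (hq : IsDyck q) (hr : IsDyck r) :
    IsDyck (true :: q ++ false :: r) := by
  constructor
  · intro k
    rcases Nat.eq_zero_or_pos k with h | h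
    · subst h; simp [heightAt_zero]
    rcases le_or_gt k (q.length + 1) with h2 | h2
    · have hk : k = 1 + (k - 1) := by omega
      rw [hk, heightAt_arch_low q r (by omega)]
      have := hq.1 (k-1)
      omega
    · rcases le_or_gt k (q.length + r.length + 2) with h3 | h3
      · have hk : k = q.length + 2 + (k - q.length - 2) := by omega
        rw [hk, heightAt_arch_high, hq.hgt_eq]
        have := hr.1 (k - q.length - 2)
        omega
      · rw [heightAt_length _ (by rw [arch_length]; omega), hgt_arch, hq.hgt_eq, hr.hgt_eq]; norm_num
  · rw [arch_length]
    have : q.length + r.length + 2 = q.length + 2 + r.length := by omega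
    rw [this, heightAt_arch_high, hq.hgt_eq, heightAt_length _ (le_refl _), hr.hgt_eq]; norm_num

open Classical in
lemma dyck_decomp {p : List Bool} (hp : IsDyck p) (hne : p ≠ []) :
    ∃ q r, IsDyck q ∧ IsDyck r ∧ p = true :: q ++ false :: r := by
  have hn : 0 < p.length := List.length_pos_iff.mpr hne
  have hex : ∃ k, 1 ≤ k ∧ heightAt p k = 0 := ⟨p.length, by omega, hp.2⟩
  obtain ⟨m, hm1, hm0, hm_le, hmin'⟩ :
      ∃ m, 1 ≤ m ∧ heightAt p m = 0 ∧ m ≤ p.length ∧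
        ∀ k, 1 ≤ k → k < m → heightAt p k ≠ 0 := by
    refine ⟨Nat.find hex, (Nat.find_spec hex).1, (Nat.find_spec hex).2,
      Nat.find_le ⟨by omega, hp.2⟩, fun k hk1 hk2 hk0 => Nat.find_min hex hk2 ⟨hk1, hk0⟩⟩
  have hmin : ∀ k, 1 ≤ k → k < m → 1 ≤ heightAt p k := by
    intro k h1 h2
    have h3 := hp.1 k
    have h4 := hmin' k h1 h2
    omega
  have hh1 : heightAt p 1 = 1 := by
    rw [heightAt_succ p (hp.head_true hne)]
    simp [heightAt_zero]
  have hm2 : 2 ≤ m := by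
    by_contra h
    have : m = 1 := by omega
    rw [this, hh1] at hm0
    exact absurd hm0 (by norm_num)
  have hmlt : m - 1 < p.length := by omega
  have hgetx : p[m-1]? = some (p[m-1]'hmlt) := List.getElem?_eq_some_iff.mpr ⟨hmlt, rfl⟩
  have hstep := heightAt_succ p hgetx
  have hm1' : m - 1 + 1 = m := by omega
  rw [hm1'] at hstep
  have hprev : 1 ≤ heightAt p (m-1) := hmin (m-1) (by omega) (by omega)
  have hx : p[m-1]'hmlt = false := by
    by_contra h
    simp only [Bool.not_eq_false] at h
    rw [h] at hstep
    simp at hstep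
    omega
  have hprev1 : heightAt p (m-1) = 1 := by
    rw [hx] at hstep; simp at hstep; omega
  refine ⟨(p.drop 1).take (m-2), p.drop m, ?_⟩
  set q : List Bool := (p.drop 1).take (m-2) with hq_def
  set r : List Bool := p.drop m with hr_def
  have hql : q.length = m - 2 := by
    rw [hq_def, List.length_take, List.length_drop]; omega
  have hpeq : p = true :: q ++ false :: r := by
    have e1 : p.take 1 = [true] := by
      have := hp.head_true hne
      rw [List.take_succ, List.take_zero, this]
      rfl
    have e2 : (p.drop 1).drop (m-2) = p.drop (m-1) := by
      rw [List.drop_drop]; congr 1; omega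
    have e3 : p.drop (m-1) = false :: p.drop m := by
      rw [List.drop_eq_getElem_cons hmlt, hx, hm1']
    calc p = p.take 1 ++ p.drop 1 := (List.take_append_drop 1 p).symm
    _ = p.take 1 ++ (q ++ (p.drop 1).drop (m-2)) := by
          rw [hq_def, List.take_append_drop, List.take_append_drop, List.take_append_drop]
    _ = true :: q ++ false :: r := by rw [e1, e2, e3]; rfl
  have hhq : ∀ k, k ≤ m - 2 → heightAt q k = heightAt p (1+k) - 1 := by
    intro k hk
    have := heightAt_arch_low q r (k := k) (by omega)
    rw [← hpeq] at this
    omega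
  have hq_total : heightAt q q.length = 0 := by
    rw [hql, hhq (m-2) (le_refl _)]
    have e : 1 + (m-2) = m - 1 := by omega
    rw [e, hprev1]
    norm_num
  have hq_dyck : IsDyck q := by
    refine ⟨fun k => ?_, hq_total⟩
    rcases le_or_gt k q.length with h | h
    · rcases Nat.eq_zero_or_pos k with h0 | h0
      · subst h0; simp [heightAt_zero]
      · rw [hhq k (by omega)]
        have := hmin (1+k) (by omega) (by omega)
        omega
    · rw [heightAt_length q (by omega)]
      rw [heightAt_length q (le_refl _)] at hq_total
      omega
  have hhr : ∀ k, heightAt r k = heightAt p (m + k) := by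
    intro k
    have := heightAt_arch_high q r k
    rw [← hpeq, hq_dyck.hgt_eq] at this
    have e : q.length + 2 + k = m + k := by omega
    rw [e] at this
    omega
  have hr_dyck : IsDyck r := by
    constructor
    · intro k
      rw [hhr k]
      exact hp.1 (m+k)
    · have hrl : r.length = p.length - m := by rw [hr_def, List.length_drop]
      rw [hhr, hrl]
      have e : m + (p.length - m) = p.length := by omega
      rw [e, hp.2]
  exact ⟨hq_dyck, hr_dyck, hpeq⟩

lemma arch_inj {q r q' r' : List Bool} (hq : IsDyck q) (hr : IsDyck r)
    (hq' : IsDyck q') (hr' : IsDyck r')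
    (h : true :: q ++ false :: r = true :: q' ++ false :: r') : q = q' ∧ r = r' := by
  have hlen : ∀ (a b a' b' : List Bool), IsDyck a → IsDyck a' →
      true :: a ++ false :: b = true :: a' ++ false :: b' →
      ¬ (a.length < a'.length) := by
    intro a b a' b' ha ha' hE hlt
    have h1 : heightAt (true :: a ++ false :: b) (a.length + 2) = 0 := by
      have := heightAt_arch_high a b 0
      rw [heightAt_zero, ha.hgt_eq] at this
      simpa using this
    have h2 : heightAt (true :: a' ++ false :: b') (a.length + 2) = 1 + heightAt a' (a.length+1) := by
      have := heightAt_arch_low a' b' (k := a.length + 1) (by omega)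
      rw [← this]; congr 1; omega
    rw [hE, h2] at h1
    have := ha'.1 (a.length + 1)
    omega
  have hle : q.length = q'.length := by
    rcases Nat.lt_trichotomy q.length q'.length with h1 | h1 | h1
    · exact absurd h1 (hlen q r q' r' hq hq' h)
    · exact h1
    · exact absurd h1 (hlen q' r' q r hq' hq h.symm)
  have := List.append_inj h (by simp [hle])
  obtain ⟨h1, h2⟩ := this
  exact ⟨by injection h1, by injection h2⟩

def NoPeak (Φ : ℤ → Prop) (p : List Bool) : Prop := ∀ h, Φ h → ¬ HasPeakAt p h
def QuadAt (p : List Bool) (i : ℕ) : Prop := ∀ j, j < 4 → p[i+j]? = some true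
def NoQuad (p : List Bool) : Prop := ∀ i, ¬ QuadAt p i
def UpTo (b : ℕ) (p : List Bool) : Prop := ∀ j, j < b → p[j]? = some true
def InitLe (b : ℕ) (p : List Bool) : Prop := ¬ UpTo (b+1) p

lemma getElem?_true_lt {p : List Bool} {i : ℕ} {x : Bool} (h : p[i]? = some x) :
    i < p.length := by
  obtain ⟨h1, -⟩ := List.getElem?_eq_some_iff.mp h
  exact h1

lemma peak_pos {p : List Bool} (hp : IsDyck p) {h : ℤ} (hpk : HasPeakAt p h) : 1 ≤ h := by
  obtain ⟨i, hT, hF, hh⟩ := hpk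
  have := heightAt_succ p hT
  simp only [if_pos rfl] at this
  have h0 := hp.1 i
  simp at this
  omega

lemma hasPeak_arch_iff {q r : List Bool} (hq : IsDyck q) (h : ℤ) :
    HasPeakAt (true :: q ++ false :: r) h ↔
      ((q = [] ∧ h = 1) ∨ HasPeakAt q (h-1) ∨ HasPeakAt r h) := by
  set L := q.length with hL
  constructor
  · rintro ⟨i, hT, hF, hh⟩
    rcases Nat.lt_or_ge i L with h1 | h1
    · -- i < L
      rcases Nat.eq_zero_or_pos i with h0 | h0
      · subst h0
        have : (true :: q ++ false :: r)[0+1]? = q[0]? := getElem?_arch_q q r (by omega)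
        simp only [Nat.zero_add] at this hF
        rw [this] at hF
        have := hq.head_true (by intro hqq; rw [hL, hqq] at h1; simp at h1)
        rw [this] at hF
        simp at hF
      · refine Or.inr (Or.inl ⟨i-1, ?_, ?_, ?_⟩)
        · have e : i - 1 + 1 = i := by omega
          have := getElem?_arch_q q r (i := i-1) (by omega)
          rw [e] at this
          rw [← this]
          exact hT
        · have e : i - 1 + 1 + 1 = i + 1 := by omega
          have := getElem?_arch_q q r (i := i-1+1) (by omega)
          rw [e] at this
          rw [← this]
          exact hF
        · have e2 : i - 1 + 1 = i := by omega
          rw [e2]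
          have := heightAt_arch_low q r (k := i) (by omega)
          have e3 : (1:ℕ) + i = i + 1 := by omega
          rw [e3] at this
          omega
    · rcases Nat.eq_or_lt_of_le h1 with h2 | h2
      · -- i = L
        rcases Nat.eq_zero_or_pos L with hL0 | hL0
        · -- q = []
          have hq0 : q = [] := List.length_eq_zero_iff.mp (by omega)
          refine Or.inl ⟨hq0, ?_⟩
          have := heightAt_arch_low q r (k := 0) (by omega)
          have e : i + 1 = 1 + 0 := by omega
          rw [e] at hh
          rw [heightAt_zero] at this
          omega
        · -- q ≠ [], p[L]? = last of q = false, contradiction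
          exfalso
          have hqne : q ≠ [] := by intro hqq; rw [hL, hqq] at hL0; simp at hL0
          have hlast := hq.last_false hqne
          have e : L - 1 + 1 = i := by omega
          have := getElem?_arch_q q r (i := L-1) (by omega)
          rw [e] at this
          rw [this] at hT
          rw [← hL] at hlast
          rw [hlast] at hT
          simp at hT
      · rcases Nat.eq_or_lt_of_le h2 with h3 | h3
        · -- i = L + 1
          exfalso
          have := getElem?_arch_mid q r
          rw [← hL] at this
          have e : L + 1 = i := by omega
          rw [e] at this
          rw [this] at hT
          simp at hT
        · -- i ≥ L + 2
          refine Or.inr (Or.inr ⟨i - L - 2, ?_, ?_, ?_⟩)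
          · have := getElem?_arch_r q r (i - L - 2)
            rw [← hL] at this
            have e : L + 2 + (i - L - 2) = i := by omega
            rw [e] at this
            rw [← this]
            exact hT
          · have := getElem?_arch_r q r (i - L - 2 + 1)
            rw [← hL] at this
            have e : L + 2 + (i - L - 2 + 1) = i + 1 := by omega
            rw [e] at this
            rw [← this]
            exact hF
          · have := heightAt_arch_high q r (i - L - 2 + 1)
            rw [← hL, hq.hgt_eq] at this
            have e : L + 2 + (i - L - 2 + 1) = i + 1 := by omega
            rw [e] at this
            omega
  · rintro (⟨hq0, hh⟩ | ⟨i, hT, hF, hh⟩ | ⟨t, hT, hF, hh⟩)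
    · refine ⟨0, getElem?_arch_zero q r, ?_, ?_⟩
      · have e := getElem?_arch_mid q r
        have e2 : q.length + 1 = 0 + 1 := by rw [hq0]; rfl
        rw [e2] at e
        exact e
      · have := heightAt_arch_low q r (k := 0) (by omega)
        rw [heightAt_zero] at this
        have e : (0:ℕ) + 1 = 1 + 0 := by omega
        rw [e, this, hh]
        norm_num
    · have hi : i < L := by have := getElem?_true_lt hT; omega
      have hi1 : i + 1 < L := by have := getElem?_true_lt hF; omega
      refine ⟨i+1, ?_, ?_, ?_⟩
      · rw [getElem?_arch_q q r hi]; exact hT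
      · have := getElem?_arch_q q r (i := i+1) hi1
        rw [← this] at hF
        exact hF
      · have := heightAt_arch_low q r (k := i+1) (by omega)
        have e : i + 1 + 1 = 1 + (i+1) := by omega
        rw [e, this]
        omega
    · refine ⟨L + 2 + t, ?_, ?_, ?_⟩
      · have := getElem?_arch_r q r t
        rw [← hL] at this
        rw [this]; exact hT
      · have := getElem?_arch_r q r (t+1)
        rw [← hL] at this
        have e : L + 2 + (t + 1) = L + 2 + t + 1 := by omega
        rw [e] at this
        rw [this]; exact hF
      · have := heightAt_arch_high q r (t+1)
        rw [← hL, hq.hgt_eq] at this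
        have e : L + 2 + (t + 1) = L + 2 + t + 1 := by omega
        rw [e] at this
        omega

lemma noQuad_arch_iff (q r : List Bool) :
    NoQuad (true :: q ++ false :: r) ↔ NoQuad q ∧ NoQuad r ∧ ¬ UpTo 3 q := by
  constructor
  · intro hp
    refine ⟨?_, ?_, ?_⟩
    · intro i hi
      refine hp (i+1) (fun j hj => ?_)
      have hlt : i + j < q.length := getElem?_true_lt (hi j hj)
      have e : i + 1 + j = i + j + 1 := by omega
      rw [e, getElem?_arch_q q r hlt]
      exact hi j hj
    · intro i hi
      refine hp (q.length + 2 + i) (fun j hj => ?_)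
      have e : q.length + 2 + i + j = q.length + 2 + (i + j) := by omega
      rw [e, getElem?_arch_r q r (i+j)]
      exact hi j hj
    · intro hup
      refine hp 0 (fun j hj => ?_)
      rcases Nat.eq_zero_or_pos j with h0 | h0
      · subst h0; exact getElem?_arch_zero q r
      · have hlt : j - 1 < q.length := getElem?_true_lt (hup (j-1) (by omega))
        have e : 0 + j = (j - 1) + 1 := by omega
        rw [e, getElem?_arch_q q r hlt]
        exact hup (j-1) (by omega)
  · rintro ⟨hq, hr, hup⟩ i hi
    rcases Nat.eq_zero_or_pos i with h0 | h0
    · subst h0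
      rcases Nat.lt_or_ge q.length 3 with hql | hql
      · have h1 := hi (q.length+1) (by omega)
        have e : 0 + (q.length + 1) = q.length + 1 := by omega
        rw [e, getElem?_arch_mid q r] at h1
        simp at h1
      · refine hup (fun j hj => ?_)
        have h1 := hi (j+1) (by omega)
        have e : 0 + (j+1) = j + 1 := by omega
        rw [e, getElem?_arch_q q r (by omega)] at h1
        exact h1
    · rcases le_or_gt (i + 3) q.length with h1 | h1
      · refine hq (i-1) (fun j hj => ?_)
        have h2 := hi j hj
        have e : i + j = (i - 1 + j) + 1 := by omega
        rw [e, getElem?_arch_q q r (by omega)] at h2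
        exact h2
      · rcases le_or_gt (q.length + 2) i with h2 | h2
        · refine hr (i - q.length - 2) (fun j hj => ?_)
          have h3 := hi j hj
          have e : i + j = q.length + 2 + (i - q.length - 2 + j) := by omega
          rw [e, getElem?_arch_r q r _] at h3
          exact h3
        · have h3 := hi (q.length + 1 - i) (by omega)
          have e : i + (q.length + 1 - i) = q.length + 1 := by omega
          rw [e, getElem?_arch_mid q r] at h3
          simp at h3

lemma upTo_arch_iff (q r : List Bool) (b : ℕ) :
    UpTo (b+1) (true :: q ++ false :: r) ↔ UpTo b q := by
  constructor
  · intro hp j hj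
    rcases Nat.lt_or_ge j q.length with h1 | h1
    · have := hp (j+1) (by omega)
      rwa [getElem?_arch_q q r h1] at this
    · exfalso
      have h2 := hp (q.length + 1) (by omega)
      rw [getElem?_arch_mid q r] at h2
      simp at h2
  · intro hq j hj
    rcases Nat.eq_zero_or_pos j with h0 | h0
    · subst h0; exact getElem?_arch_zero q r
    · have hlt : j - 1 < q.length := getElem?_true_lt (hq (j-1) (by omega))
      have e : j = (j - 1) + 1 := by omega
      rw [e, getElem?_arch_q q r hlt]
      exact hq (j-1) (by omega)

lemma upTo_mono {p : List Bool} {b b' : ℕ} (h : b ≤ b') (hp : UpTo b' p) : UpTo b p :=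
  fun j hj => hp j (by omega)

lemma noQuad_initLe3 {p : List Bool} (hp : NoQuad p) : InitLe 3 p := by
  intro hup
  exact hp 0 (fun j hj => by have := hup j hj; simpa using this)

def allLists : ℕ → Finset (List Bool)
  | 0 => {[]}
  | n+1 => (Finset.univ ×ˢ allLists n).image (fun x => x.1 :: x.2)

lemma mem_allLists (n : ℕ) (l : List Bool) : l ∈ allLists n ↔ l.length = n := by
  induction n generalizing l with
  | zero => simp [allLists, List.length_eq_zero_iff]
  | succ n ih =>
    simp only [allLists, Finset.mem_image, Finset.mem_product]
    constructor
    · rintro ⟨⟨x, t⟩, ⟨-, ht⟩, rfl⟩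
      simp [ih t |>.mp ht]
    · intro hl
      obtain ⟨x, t, rfl⟩ := List.exists_cons_of_ne_nil (l := l) (by rintro rfl; simp at hl)
      exact ⟨(x,t), ⟨Finset.mem_univ _, (ih t).mpr (by simpa using hl)⟩, rfl⟩

open Classical in
noncomputable def cnt (P : List Bool → Prop) (n : ℕ) : ℕ :=
  ((allLists (2*n)).filter (fun p => IsDyck p ∧ P p)).card

open Classical in
lemma ncard_eq_cnt (P : List Bool → Prop) (n : ℕ) :
    Set.ncard {p : List Bool | p.length = 2*n ∧ IsDyck p ∧ P p} = cnt P n := by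
  rw [cnt, ← Set.ncard_coe_finset]
  congr 1
  ext p
  simp [mem_allLists]

lemma cnt_zero (P : List Bool → Prop) (hP : P []) : cnt P 0 = 1 := by
  classical
  rw [cnt]
  have : allLists (2*0) = {[]} := rfl
  rw [this]
  rw [Finset.filter_singleton]
  simp [IsDyck.nil, hP]

open Classical in
lemma cnt_arch (P Q R : List Bool → Prop)
    (hPQR : ∀ q r, IsDyck q → IsDyck r →
      (P (true :: q ++ false :: r) ↔ Q q ∧ R r)) (n : ℕ) :
    cnt P (n+1) = ∑ k ∈ Finset.range (n+1), cnt Q k * cnt R (n-k) := by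
  classical
  set f : List Bool × List Bool → List Bool := fun qr => true :: qr.1 ++ false :: qr.2 with hf
  set A : ℕ → Finset (List Bool) := fun k => (allLists (2*k)).filter (fun q => IsDyck q ∧ Q q) with hA
  set B : ℕ → Finset (List Bool) := fun k => (allLists (2*k)).filter (fun r => IsDyck r ∧ R r) with hB
  have key : (allLists (2*(n+1))).filter (fun p => IsDyck p ∧ P p) =
      (Finset.range (n+1)).biUnion (fun k => (A k ×ˢ B (n-k)).image f) := by
    ext p
    simp only [Finset.mem_filter, Finset.mem_biUnion, Finset.mem_range, Finset.mem_image,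
      Finset.mem_product, mem_allLists, hA, hB, hf]
    constructor
    · rintro ⟨hlen, hdy, hP⟩
      have hne : p ≠ [] := by intro h; subst h; simp at hlen
      obtain ⟨q, r, hq, hr, hpeq⟩ := dyck_decomp hdy hne
      obtain ⟨k, hk⟩ := hq.length_even
      have hlen2 : q.length + r.length + 2 = 2*(n+1) := by
        rw [hpeq] at hlen; rw [← arch_length q r, hlen]
      obtain ⟨k', hk'⟩ := hr.length_even
      have hkn : k ≤ n := by omega
      have hk'' : k' = n - k := by omega
      refine ⟨k, by omega, (q, r), ⟨⟨hk, hq, ?_⟩, ⟨by show r.length = 2*(n-k); omega, hr, ?_⟩⟩, hpeq.symm⟩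
      · exact ((hPQR q r hq hr).mp (by rwa [← hpeq])).1
      · exact ((hPQR q r hq hr).mp (by rwa [← hpeq])).2
    · rintro ⟨k, hkn, ⟨q, r⟩, ⟨⟨hql, hqd, hqQ⟩, ⟨hrl, hrd, hrR⟩⟩, rfl⟩
      refine ⟨?_, hqd.arch hrd, (hPQR q r hqd hrd).mpr ⟨hqQ, hrR⟩⟩
      rw [arch_length, hql, hrl]; omega
  rw [cnt, key, Finset.card_biUnion]
  · refine Finset.sum_congr rfl (fun k hk => ?_)
    have hinj : Set.InjOn f ↑(A k ×ˢ B (n-k)) := by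
      rintro ⟨q, r⟩ hqr ⟨q', r'⟩ hqr' heq
      simp only [Finset.coe_product, Set.mem_prod, Finset.mem_coe, Finset.mem_filter, hA, hB] at hqr hqr'
      simp only [hf] at heq
      have := arch_inj hqr.1.2.1 hqr.2.2.1 hqr'.1.2.1 hqr'.2.2.1 heq
      simp only [Prod.mk.injEq]
      exact this
    rw [Finset.card_image_of_injOn hinj, Finset.card_product]
    rfl
  · intro k hk k' hk' hkk
    rw [Function.onFun_apply, Finset.disjoint_left]
    rintro p hp hp'
    simp only [Finset.mem_image, Finset.mem_product, Finset.mem_filter, mem_allLists, hA, hB, hf] at hp hp'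
    obtain ⟨⟨q, r⟩, ⟨⟨hql, hqd, -⟩, ⟨hrl, hrd, -⟩⟩, rfl⟩ := hp
    obtain ⟨⟨q', r'⟩, ⟨⟨hql', hqd', -⟩, ⟨hrl', hrd', -⟩⟩, heq⟩ := hp'
    obtain ⟨h1, h2⟩ := arch_inj hqd' hrd' hqd hrd heq
    apply hkk
    have h3 : q'.length = q.length := congrArg List.length h1
    have h4 : q'.length = 2 * k' := hql'
    have h5 : q.length = 2 * k := hql
    omega

def PhiA (h : ℤ) : Prop := Odd h ∧ 3 ≤ h
def PhiE (h : ℤ) : Prop := Even h ∧ 2 ≤ h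
def PhiO (h : ℤ) : Prop := Odd h ∧ 1 ≤ h

def PA (Φ : ℤ → Prop) (b : ℕ) (p : List Bool) : Prop := NoPeak Φ p ∧ NoQuad p ∧ InitLe b p
def PR (Φ : ℤ → Prop) (p : List Bool) : Prop := NoPeak Φ p ∧ NoQuad p
def QA (Φ : ℤ → Prop) (b : ℕ) (q : List Bool) : Prop :=
  NoPeak (fun h => Φ (h+1)) q ∧ NoQuad q ∧ InitLe b q ∧ (q = [] → ¬ Φ 1)

lemma PA_arch_iff (Φ : ℤ → Prop) {b : ℕ} (hb : b ≤ 2) (q r : List Bool)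
    (hq : IsDyck q) (hr : IsDyck r) :
    PA Φ (b+1) (true :: q ++ false :: r) ↔ QA Φ b q ∧ PR Φ r := by
  constructor
  · rintro ⟨hNP, hNQ, hIL⟩
    obtain ⟨hNQq, hNQr, hUp3⟩ := (noQuad_arch_iff q r).mp hNQ
    have hILq : InitLe b q := fun hu => hIL ((upTo_arch_iff q r (b+1)).mpr hu)
    refine ⟨⟨?_, hNQq, hILq, ?_⟩, ?_, hNQr⟩
    · intro h hΦ hpk
      refine hNP (h+1) hΦ ((hasPeak_arch_iff hq (h+1)).mpr (Or.inr (Or.inl ?_)))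
      have e : h + 1 - 1 = h := by ring
      rw [e]
      exact hpk
    · intro hq0 hΦ1
      exact hNP 1 hΦ1 ((hasPeak_arch_iff hq 1).mpr (Or.inl ⟨hq0, rfl⟩))
    · intro h hΦ hpk
      exact hNP h hΦ ((hasPeak_arch_iff hq h).mpr (Or.inr (Or.inr hpk)))
  · rintro ⟨⟨hNPq, hNQq, hILq, hq0⟩, hNPr, hNQr⟩
    refine ⟨?_, ?_, ?_⟩
    · intro h hΦ hpk
      rcases (hasPeak_arch_iff hq h).mp hpk with ⟨hqe, rfl⟩ | hpkq | hpkr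
      · exact hq0 hqe hΦ
      · refine hNPq (h-1) ?_ hpkq
        show Φ (h - 1 + 1)
        have e : h - 1 + 1 = h := by ring
        rw [e]
        exact hΦ
      · exact hNPr h hΦ hpkr
    · refine (noQuad_arch_iff q r).mpr ⟨hNQq, hNQr, ?_⟩
      intro hu
      exact hILq (upTo_mono (by omega) hu)
    · intro hu
      exact hILq ((upTo_arch_iff q r (b+1)).mp hu)

open Classical in
lemma cnt_congr {P P' : List Bool → Prop} {n : ℕ}
    (h : ∀ p : List Bool, p.length = 2*n → IsDyck p → (P p ↔ P' p)) :
    cnt P n = cnt P' n := by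
  rw [cnt, cnt]
  congr 1
  apply Finset.filter_congr
  intro p hp
  rw [mem_allLists] at hp
  constructor
  · rintro ⟨hd, hP⟩; exact ⟨hd, (h p hp hd).mp hP⟩
  · rintro ⟨hd, hP⟩; exact ⟨hd, (h p hp hd).mpr hP⟩

lemma cnt_PA_rec (Φ : ℤ → Prop) {b : ℕ} (hb : b ≤ 2) (n : ℕ) :
    cnt (PA Φ (b+1)) (n+1) =
      ∑ k ∈ Finset.range (n+1), cnt (QA Φ b) k * cnt (PR Φ) (n-k) :=
  cnt_arch _ _ _ (fun q r hq hr => PA_arch_iff Φ hb q r hq hr) n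

lemma cnt_PA3_eq_PR (Φ : ℤ → Prop) (n : ℕ) : cnt (PA Φ 3) n = cnt (PR Φ) n :=
  cnt_congr (fun p _ _ =>
    ⟨fun ⟨a, b, _⟩ => ⟨a, b⟩, fun ⟨a, b⟩ => ⟨a, b, noQuad_initLe3 b⟩⟩)

lemma noPeak_nil (Φ : ℤ → Prop) : NoPeak Φ [] := by
  rintro h - ⟨i, hT, -, -⟩
  simp at hT

lemma noQuad_nil : NoQuad [] := by
  intro i hi
  have := hi 0 (by omega)
  simp at this

lemma initLe_nil (b : ℕ) : InitLe b [] := by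
  intro hu
  have := hu 0 (by omega)
  simp at this

lemma cnt_PA_zero (Φ : ℤ → Prop) (b : ℕ) : cnt (PA Φ b) 0 = 1 :=
  cnt_zero _ ⟨noPeak_nil Φ, noQuad_nil, initLe_nil b⟩

lemma cnt_PR_zero (Φ : ℤ → Prop) : cnt (PR Φ) 0 = 1 :=
  cnt_zero _ ⟨noPeak_nil Φ, noQuad_nil⟩

open Classical in
lemma cnt_zero' (P : List Bool → Prop) (hP : ¬ P []) : cnt P 0 = 0 := by
  classical
  rw [cnt]
  have : allLists (2*0) = {[]} := rfl
  rw [this, Finset.filter_singleton]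
  simp [hP]

open Classical in
lemma cnt_PA_budget0 (Φ : ℤ → Prop) (n : ℕ) : cnt (PA Φ 0) (n+1) = 0 := by
  classical
  rw [cnt]
  rw [Finset.card_eq_zero, Finset.filter_eq_empty_iff]
  rintro p hp ⟨hd, -, -, hIL⟩
  rw [mem_allLists] at hp
  have hne : p ≠ [] := by intro h; subst h; simp at hp
  refine hIL (fun j hj => ?_)
  have : j = 0 := by omega
  subst this
  exact hd.head_true hne

def E1 : ℕ → ℕ
  | 0 => 1
  | n+1 => genCatalan n

def Ofn : ℕ → ℕ
  | 0 => 1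
  | 1 => 0
  | n+2 => genCatalan (n+1)

lemma genCatalan_zero : genCatalan 0 = 1 := by rw [genCatalan]
lemma genCatalan_one : genCatalan 1 = 1 := by rw [genCatalan]

lemma genCatalan_rec (n : ℕ) : genCatalan (n+2) =
    genCatalan (n+1) + ∑ k ∈ Finset.Icc 1 n, genCatalan k * genCatalan (n - k) := by
  rw [genCatalan]
  exact congrArg (genCatalan (n+1) + ·) (Finset.sum_attach (Finset.Icc 1 n) (fun k => genCatalan k * genCatalan (n - k)))

lemma genCatalan_rec' (n : ℕ) : genCatalan (n+2) =
    genCatalan (n+1) + ∑ k ∈ Finset.range n, genCatalan (k+1) * genCatalan (n-(k+1)) := by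
  rw [genCatalan_rec]
  congr 1
  have : Finset.Icc 1 n = Finset.Ico 1 (n+1) := by ext x; simp [Nat.lt_succ_iff]
  rw [this, Finset.sum_Ico_eq_sum_range]
  have e : n + 1 - 1 = n := by omega
  rw [e]
  refine Finset.sum_congr rfl (fun k hk => ?_)
  have e1 : 1 + k = k + 1 := by omega
  rw [e1]

lemma gen_conv : ∀ n : ℕ,
    ∑ k ∈ Finset.range (n+1), Ofn k * genCatalan (n-k) = genCatalan (n+1)
  | 0 => by simp [Ofn, genCatalan_zero, genCatalan_one]
  | (n+1) => by
    rw [Finset.sum_range_succ' _ (n+1), Finset.sum_range_succ' _ n]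
    have h1 : ∀ k ∈ Finset.range n,
        Ofn (k+1+1) * genCatalan (n+1-(k+1+1)) = genCatalan (k+1) * genCatalan (n-(k+1)) := by
      intro k hk
      have e : n+1-(k+1+1) = n-(k+1) := by omega
      rw [e]
      rfl
    have h1' : (∑ k ∈ Finset.range n, Ofn (k+1+1) * genCatalan (n+1-(k+1+1))) =
        ∑ k ∈ Finset.range n, genCatalan (k+1) * genCatalan (n-(k+1)) :=
      Finset.sum_congr rfl h1
    rw [h1']
    have e0 : Ofn (0+1) * genCatalan (n+1-(0+1)) = 0 := by simp [Ofn]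
    have e00 : Ofn 0 * genCatalan (n+1-0) = genCatalan (n+1) := by simp [Ofn]
    rw [e0, e00, genCatalan_rec' n]
    omega

lemma gen_conv3 : ∀ n : ℕ,
    ∑ k ∈ Finset.range (n+1),
      (if k = 0 then 0 else genCatalan (k-1)) * Ofn (n-k) = Ofn (n+1)
  | 0 => by simp [Ofn]
  | (n+1) => by
    rw [Finset.sum_range_succ' _ (n+1)]
    simp only [if_neg (Nat.succ_ne_zero _), if_pos rfl, Nat.zero_mul, add_zero]
    have h1 : ∀ k ∈ Finset.range (n+1),
        genCatalan (k+1-1) * Ofn (n+1-(k+1)) = genCatalan k * Ofn (n-k) := by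
      intro k hk
      have e1 : k+1-1 = k := by omega
      have e2 : n+1-(k+1) = n-k := by omega
      rw [e1, e2]
    have h1' : (∑ k ∈ Finset.range (n+1), genCatalan (k+1-1) * Ofn (n+1-(k+1))) =
        ∑ k ∈ Finset.range (n+1), genCatalan k * Ofn (n-k) :=
      Finset.sum_congr rfl h1
    rw [h1']
    have hrefl := Finset.sum_range_reflect (fun k => Ofn k * genCatalan (n-k)) (n+1)
    rw [gen_conv n] at hrefl
    have h2 : ∑ k ∈ Finset.range (n+1), genCatalan k * Ofn (n-k) =
        ∑ j ∈ Finset.range (n+1), Ofn (n+1-1-j) * genCatalan (n-(n+1-1-j)) := by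
      refine Finset.sum_congr rfl (fun j hj => ?_)
      rw [Finset.mem_range] at hj
      have e1 : n+1-1-j = n-j := by omega
      have e2 : n-(n-j) = j := by omega
      rw [e1, e2, Nat.mul_comm]
    rw [h2, hrefl]
    simp [Ofn]

lemma gen_conv2 (n : ℕ) :
    ∑ k ∈ Finset.range (n+1), E1 k * genCatalan (n-k+1) = genCatalan (n+2) := by
  rw [Finset.sum_range_succ' _ n]
  have h1 : ∀ k ∈ Finset.range n,
      E1 (k+1) * genCatalan (n-(k+1)+1) = genCatalan k * genCatalan (n-k) := by
    intro k hk
    rw [Finset.mem_range] at hk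
    have e : n-(k+1)+1 = n-k := by omega
    rw [e]
    rfl
  have h1' : (∑ k ∈ Finset.range n, E1 (k+1) * genCatalan (n-(k+1)+1)) =
      ∑ k ∈ Finset.range n, genCatalan k * genCatalan (n-k) :=
    Finset.sum_congr rfl h1
  rw [h1']
  have e00 : E1 0 * genCatalan (n-0+1) = genCatalan (n+1) := by simp [E1]
  rw [e00]
  have hrefl := Finset.sum_range_reflect (fun k => genCatalan (k+1) * genCatalan (n-(k+1))) n
  have h2 : ∑ k ∈ Finset.range n, genCatalan k * genCatalan (n-k) =
      ∑ j ∈ Finset.range n, genCatalan (n-1-j+1) * genCatalan (n-(n-1-j+1)) := by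
    refine Finset.sum_congr rfl (fun j hj => ?_)
    rw [Finset.mem_range] at hj
    have e1 : n-1-j+1 = n-j := by omega
    have e2 : n-(n-j) = j := by omega
    rw [e1, e2, Nat.mul_comm]
  rw [h2, hrefl, genCatalan_rec' n]
  omega

lemma odd_succ_iff (h : ℤ) : Odd (h+1) ↔ Even h := by
  rw [← Int.not_even_iff_odd, Int.even_add_one, not_not]

lemma even_succ_iff (h : ℤ) : Even (h+1) ↔ Odd h := by
  rw [Int.even_add_one, ← Int.not_even_iff_odd]

lemma not_phiA_one : ¬ PhiA 1 := fun ⟨_, h⟩ => by omega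
lemma phiO_one : PhiO 1 := ⟨⟨0, by ring⟩, le_refl 1⟩

lemma cnt_QA_A (b k : ℕ) : cnt (QA PhiA b) k = cnt (PA PhiE b) k :=
  cnt_congr fun p _ _ => by
    constructor
    · rintro ⟨h1, h2, h3, -⟩
      exact ⟨fun h hh => h1 h ⟨(odd_succ_iff h).mpr hh.1, by have := hh.2; omega⟩, h2, h3⟩
    · rintro ⟨h1, h2, h3⟩
      refine ⟨fun h hh => h1 h ⟨(odd_succ_iff h).mp hh.1, by have := hh.2; omega⟩, h2, h3,
        fun _ => not_phiA_one⟩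

lemma cnt_QA_E (b k : ℕ) : cnt (QA PhiE b) k = cnt (PA PhiO b) k :=
  cnt_congr fun p _ _ => by
    constructor
    · rintro ⟨h1, h2, h3, -⟩
      exact ⟨fun h hh => h1 h ⟨(even_succ_iff h).mpr hh.1, by have := hh.2; omega⟩, h2, h3⟩
    · rintro ⟨h1, h2, h3⟩
      refine ⟨fun h hh => h1 h ⟨(even_succ_iff h).mp hh.1, by have := hh.2; omega⟩, h2, h3,
        fun _ hE => ?_⟩
      obtain ⟨c, hc⟩ := hE.1
      omega

lemma cnt_QA_O (b k : ℕ) : cnt (QA PhiO b) k = cnt (fun q => PA PhiE b q ∧ q ≠ []) k :=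
  cnt_congr fun p _ hd => by
    constructor
    · rintro ⟨h1, h2, h3, h4⟩
      refine ⟨⟨fun h hh hpk => h1 h ⟨(odd_succ_iff h).mpr hh.1, by have := hh.2; omega⟩ hpk,
        h2, h3⟩, fun he => h4 he phiO_one⟩
    · rintro ⟨⟨h1, h2, h3⟩, h4⟩
      refine ⟨fun h hh hpk => ?_, h2, h3, fun he => absurd he h4⟩
      have hpos := peak_pos hd hpk
      have heven : Even h := (odd_succ_iff h).mp hh.1
      obtain ⟨c, hc⟩ := heven
      refine h1 h ⟨⟨c, hc⟩, by omega⟩ hpk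

lemma cnt_QAO_zero (b : ℕ) : cnt (fun q => PA PhiE b q ∧ q ≠ []) 0 = 0 :=
  cnt_zero' _ (by simp)

lemma cnt_QAO_succ (b k : ℕ) :
    cnt (fun q => PA PhiE b q ∧ q ≠ []) (k+1) = cnt (PA PhiE b) (k+1) :=
  cnt_congr fun p hl _ =>
    ⟨fun h => h.1, fun h => ⟨h, by intro he; rw [he] at hl; simp at hl⟩⟩

lemma cnt_PA_E0 (k : ℕ) : cnt (PA PhiE 0) k = if k = 0 then 1 else 0 := by
  cases k with
  | zero => simp [cnt_PA_zero]
  | succ k => simp [cnt_PA_budget0]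

lemma cnt_PA_O0 (k : ℕ) : cnt (PA PhiO 0) k = if k = 0 then 1 else 0 := by
  cases k with
  | zero => simp [cnt_PA_zero]
  | succ k => simp [cnt_PA_budget0]

lemma main_values (n : ℕ) :
    cnt (PA PhiE 1) n = E1 n ∧ cnt (PA PhiE 2) n = E1 n ∧
    cnt (PA PhiE 3) n = genCatalan n ∧
    cnt (PA PhiO 1) n = (if n = 0 then 1 else 0) ∧ cnt (PA PhiO 2) n = Ofn n ∧
    cnt (PA PhiO 3) n = Ofn n ∧ cnt (PA PhiA 3) n = genCatalan (n+1) := by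
  induction n using Nat.strong_induction_on with
  | _ n ih =>
    match n with
    | 0 =>
      refine ⟨cnt_PA_zero _ _, cnt_PA_zero _ _, ?_, by simp [cnt_PA_zero], ?_, ?_, ?_⟩
      · rw [cnt_PA_zero, genCatalan_zero]
      · rw [cnt_PA_zero]; rfl
      · rw [cnt_PA_zero]; rfl
      · rw [cnt_PA_zero, genCatalan_one]
    | (m+1) =>
      have c1 : cnt (PA PhiE 1) (m+1) = E1 (m+1) := by
        rw [show (1:ℕ) = 0+1 from rfl, cnt_PA_rec PhiE (by omega) m]
        have hs : ∀ k ∈ Finset.range (m+1),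
            cnt (QA PhiE 0) k * cnt (PR PhiE) (m-k)
              = (if k = 0 then 1 else 0) * genCatalan (m-k) := by
          intro k hk
          rw [Finset.mem_range] at hk
          rw [cnt_QA_E, cnt_PA_O0, ← cnt_PA3_eq_PR PhiE, (ih (m-k) (by omega)).2.2.1]
        rw [Finset.sum_congr rfl hs, Finset.sum_eq_single_of_mem 0
          (Finset.mem_range.mpr (by omega)) (fun b _ hb => by simp [hb])]
        simp [E1]
      have c2 : cnt (PA PhiE 2) (m+1) = E1 (m+1) := by
        rw [show (2:ℕ) = 1+1 from rfl, cnt_PA_rec PhiE (by omega) m]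
        have hs : ∀ k ∈ Finset.range (m+1),
            cnt (QA PhiE 1) k * cnt (PR PhiE) (m-k)
              = (if k = 0 then 1 else 0) * genCatalan (m-k) := by
          intro k hk
          rw [Finset.mem_range] at hk
          rw [cnt_QA_E, (ih k (by omega)).2.2.2.1, ← cnt_PA3_eq_PR PhiE,
            (ih (m-k) (by omega)).2.2.1]
        rw [Finset.sum_congr rfl hs, Finset.sum_eq_single_of_mem 0
          (Finset.mem_range.mpr (by omega)) (fun b _ hb => by simp [hb])]
        simp [E1]
      have c3 : cnt (PA PhiE 3) (m+1) = genCatalan (m+1) := by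
        rw [show (3:ℕ) = 2+1 from rfl, cnt_PA_rec PhiE (by omega) m]
        have hs : ∀ k ∈ Finset.range (m+1),
            cnt (QA PhiE 2) k * cnt (PR PhiE) (m-k)
              = Ofn k * genCatalan (m-k) := by
          intro k hk
          rw [Finset.mem_range] at hk
          rw [cnt_QA_E, (ih k (by omega)).2.2.2.2.1, ← cnt_PA3_eq_PR PhiE,
            (ih (m-k) (by omega)).2.2.1]
        rw [Finset.sum_congr rfl hs, gen_conv m]
      have c4 : cnt (PA PhiO 1) (m+1) = (if m+1 = 0 then 1 else 0) := by
        rw [show (1:ℕ) = 0+1 from rfl, cnt_PA_rec PhiO (by omega) m]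
        rw [Finset.sum_eq_zero]
        · simp
        · intro k hk
          cases k with
          | zero => rw [cnt_QA_O, cnt_QAO_zero]; simp
          | succ j => rw [cnt_QA_O, cnt_QAO_succ, cnt_PA_budget0]; simp
      have c5 : cnt (PA PhiO 2) (m+1) = Ofn (m+1) := by
        rw [show (2:ℕ) = 1+1 from rfl, cnt_PA_rec PhiO (by omega) m]
        have hs : ∀ k ∈ Finset.range (m+1),
            cnt (QA PhiO 1) k * cnt (PR PhiO) (m-k)
              = (if k = 0 then 0 else genCatalan (k-1)) * Ofn (m-k) := by
          intro k hk
          rw [Finset.mem_range] at hk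
          rw [← cnt_PA3_eq_PR PhiO, (ih (m-k) (by omega)).2.2.2.2.2.1]
          cases k with
          | zero => rw [cnt_QA_O, cnt_QAO_zero]; simp
          | succ j =>
            rw [cnt_QA_O, cnt_QAO_succ, (ih (j+1) (by omega)).1]
            simp [E1]
        rw [Finset.sum_congr rfl hs, gen_conv3 m]
      have c6 : cnt (PA PhiO 3) (m+1) = Ofn (m+1) := by
        rw [show (3:ℕ) = 2+1 from rfl, cnt_PA_rec PhiO (by omega) m]
        have hs : ∀ k ∈ Finset.range (m+1),
            cnt (QA PhiO 2) k * cnt (PR PhiO) (m-k)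
              = (if k = 0 then 0 else genCatalan (k-1)) * Ofn (m-k) := by
          intro k hk
          rw [Finset.mem_range] at hk
          rw [← cnt_PA3_eq_PR PhiO, (ih (m-k) (by omega)).2.2.2.2.2.1]
          cases k with
          | zero => rw [cnt_QA_O, cnt_QAO_zero]; simp
          | succ j =>
            rw [cnt_QA_O, cnt_QAO_succ, (ih (j+1) (by omega)).2.1]
            simp [E1]
        rw [Finset.sum_congr rfl hs, gen_conv3 m]
      have c7 : cnt (PA PhiA 3) (m+1) = genCatalan (m+2) := by
        rw [show (3:ℕ) = 2+1 from rfl, cnt_PA_rec PhiA (by omega) m]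
        have hs : ∀ k ∈ Finset.range (m+1),
            cnt (QA PhiA 2) k * cnt (PR PhiA) (m-k)
              = E1 k * genCatalan (m-k+1) := by
          intro k hk
          rw [Finset.mem_range] at hk
          rw [cnt_QA_A, (ih k (by omega)).2.1, ← cnt_PA3_eq_PR PhiA,
            (ih (m-k) (by omega)).2.2.2.2.2.2]
        rw [Finset.sum_congr rfl hs, gen_conv2 m]
      exact ⟨c1, c2, c3, c4, c5, c6, c7⟩

lemma ext_left (p : List Bool) : ∀ i, p[i]? = some true →
    ∃ a, a ≤ i ∧ (∀ k, a ≤ k → k ≤ i → p[k]? = some true) ∧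
      (a = 0 ∨ p[a-1]? ≠ some true) := by
  intro i
  induction i with
  | zero =>
    intro h
    refine ⟨0, le_refl 0, fun k hk1 hk2 => ?_, Or.inl rfl⟩
    have e : k = 0 := by omega
    rw [e]
    exact h
  | succ i ihh =>
    intro h
    by_cases h2 : p[i]? = some true
    · obtain ⟨a, ha1, ha2, ha3⟩ := ihh h2
      refine ⟨a, by omega, fun k hk1 hk2 => ?_, ha3⟩
      rcases le_or_gt k i with h3 | h3
      · exact ha2 k hk1 h3
      · have : k = i+1 := by omega
        subst this
        exact h
    · refine ⟨i+1, le_refl _, fun k hk1 hk2 => ?_, Or.inr (by simpa using h2)⟩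
      have : k = i+1 := by omega
      subst this
      exact h

open Classical in
lemma noLongRun_iff_noQuad (p : List Bool) :
    (∀ m, 3 < m → ¬ HasUpRun p m) ↔ NoQuad p := by
  constructor
  · intro hL i hi
    have ht3 : p[i+3]? = some true := hi 3 (by omega)
    have hlen3 : i + 3 < p.length := getElem?_true_lt ht3
    obtain ⟨a, ha1, ha2, ha3⟩ := ext_left p (i+3) ht3
    have halei : a ≤ i := by
      rcases ha3 with h0 | hne
      · omega
      · by_contra hgt
        refine hne ?_
        have e : a - 1 = i + (a-1-i) := by omega
        rw [e]
        exact hi (a-1-i) (by omega)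
    have hexu : ∃ t, p[i+4+t]? ≠ some true :=
      ⟨p.length, by rw [List.getElem?_eq_none (by omega)]; simp⟩
    set u := Nat.find hexu with hu
    have hu_spec : p[i+4+u]? ≠ some true := Nat.find_spec hexu
    have hu_min : ∀ t, t < u → p[i+4+t]? = some true := by
      intro t ht
      have := Nat.find_min hexu ht
      simpa using this
    set m := i + 4 + u - a with hm
    have hkey : ∀ j, j < m → p[a+j]? = some true := by
      intro j hj
      rcases le_or_gt (a+j) (i+3) with h1 | h1
      · exact ha2 (a+j) (by omega) h1
      · have e : a + j = i + 4 + (a+j-i-4) := by omega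
        rw [e]
        exact hu_min _ (by omega)
    have hm4 : 3 < m := by omega
    refine hL m hm4 ⟨a, hkey, ?_, ?_⟩
    · rcases ha3 with h0 | hne
      · exact Or.inl h0
      · have hlt : a - 1 < p.length := by omega
        have hsome : p[a-1]? = some (p[a-1]'hlt) := List.getElem?_eq_some_iff.mpr ⟨hlt, rfl⟩
        right
        cases hb : p[a-1]'hlt with
        | true => exact absurd (by rw [hsome, hb]) hne
        | false => rw [hsome, hb]
    · have ham : a + m = i + 4 + u := by omega
      rcases le_or_gt p.length (i+4+u) with h1 | h1
      · right
        have h2 := getElem?_true_lt (hkey (m-1) (by omega))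
        omega
      · left
        have hsome : p[i+4+u]? = some (p[i+4+u]'h1) := List.getElem?_eq_some_iff.mpr ⟨h1, rfl⟩
        rw [ham]
        cases hb : p[i+4+u]'h1 with
        | true => exact absurd (by rw [hsome, hb]) hu_spec
        | false => rw [hsome, hb]
  · rintro hq m hm ⟨i, h1, h2, h3⟩
    exact hq i (fun j hj => h1 j (by omega))

lemma peak_cond_iff (p : List Bool) :
    (∀ r : ℕ, ¬ HasPeakAt p (2*(r:ℤ)+3)) ↔ NoPeak PhiA p := by
  constructor
  · rintro h h' ⟨hodd, h3⟩ hpk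
    obtain ⟨c, hc⟩ := hodd
    have hc1 : 1 ≤ c := by omega
    have hcast : (((c-1).toNat : ℤ)) = c - 1 := Int.toNat_of_nonneg (by omega)
    refine h (c-1).toNat ?_
    have e : 2*(((c-1).toNat : ℤ))+3 = h' := by rw [hcast]; omega
    rw [e]
    exact hpk
  · intro h r hpk
    exact h (2*(r:ℤ)+3) ⟨⟨(r:ℤ)+1, by ring⟩, by omega⟩ hpk

/-- The number of Dyck paths of semilength `n` with no peak at any height in
`{2r+3 : r ≥ 0}` and no up-run of length greater than 3 equals the `(n+1)`-th
generalized Catalan number. -/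
theorem stmt3 (n : ℕ) :
    Set.ncard {p : List Bool | p.length = 2 * n ∧ IsDyck p ∧
        (∀ r : ℕ, ¬ HasPeakAt p (2 * (r : ℤ) + 3)) ∧
        (∀ m : ℕ, 3 < m → ¬ HasUpRun p m)} = genCatalan (n + 1) := by
  have h0 := ncard_eq_cnt (fun p => (∀ r : ℕ, ¬ HasPeakAt p (2 * (r : ℤ) + 3)) ∧
    (∀ m : ℕ, 3 < m → ¬ HasUpRun p m)) n
  have h1 : cnt (fun p => (∀ r : ℕ, ¬ HasPeakAt p (2 * (r : ℤ) + 3)) ∧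
      (∀ m : ℕ, 3 < m → ¬ HasUpRun p m)) n = cnt (PA PhiA 3) n := by
    refine cnt_congr (fun p _ hd => ?_)
    constructor
    · rintro ⟨hA, hB⟩
      have hq := (noLongRun_iff_noQuad p).mp hB
      exact ⟨(peak_cond_iff p).mp hA, hq, noQuad_initLe3 hq⟩
    · rintro ⟨hN, hq, -⟩
      exact ⟨(peak_cond_iff p).mpr hN, (noLongRun_iff_noQuad p).mpr hq⟩
  exact h0.trans (h1.trans (main_values n).2.2.2.2.2.2)
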